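/- As ξ → 0⁺: (i) 1'Σ(ξ)^{-1}1 → 1; and (ii) for any X ∈ ℝⁿ with X'GX ≠ 0, ν(ξ)·X'Σ(ξ)^{-1}X → X'D^{-1}X − (1'D^{-1}X)²/(1'D^{-1}1) = X'GX. -/

import Mathlib

open Matrix Filter Topology

/-- The all-ones vector. -/
def ones (n : ℕ) : Fin n → ℝ := fun _ => 1

/-- G = D⁻¹ − D⁻¹11'D⁻¹/(1'D⁻¹1). -/
noncomputable def Gmat {n : ℕ} (D : Matrix (Fin n) (Fin n) ℝ) : Matrix (Fin n) (Fin n) ℝ :=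
  D⁻¹ - (ones n ⬝ᵥ D⁻¹.mulVec (ones n))⁻¹ • (D⁻¹ * vecMulVec (ones n) (ones n) * D⁻¹)

lemma onesVm {n : ℕ} (y : Fin n → ℝ) :
    (vecMulVec (ones n) (ones n)) *ᵥ y = (ones n ⬝ᵥ y) • ones n := by
  ext i
  simp [Matrix.mulVec, Matrix.vecMulVec_apply, dotProduct, ones]

/-- Sherman–Morrison, scalar form. -/
lemma sm_scalar {n : ℕ} (A S : Matrix (Fin n) (Fin n) ℝ) (t : ℝ) (ht : t ≠ 0)
    (hA : IsUnit A.det) (hS : IsUnit S.det)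
    (hdec : S = vecMulVec (ones n) (ones n) + t • A)
    (hta : t + ones n ⬝ᵥ A⁻¹.mulVec (ones n) ≠ 0)
    (u v : Fin n → ℝ) :
    u ⬝ᵥ S⁻¹.mulVec v = t⁻¹ * ((u ⬝ᵥ A⁻¹.mulVec v) -
      (t + ones n ⬝ᵥ A⁻¹.mulVec (ones n))⁻¹ * (ones n ⬝ᵥ A⁻¹.mulVec v) *
        (u ⬝ᵥ A⁻¹.mulVec (ones n))) := by
  set p := A⁻¹ *ᵥ v with hp
  set q := A⁻¹ *ᵥ ones n with hq
  set a := ones n ⬝ᵥ q with ha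
  set s := ones n ⬝ᵥ p with hs
  set c := (t + a)⁻¹ * s with hc
  set w := t⁻¹ • (p - c • q) with hw
  have hAp : A *ᵥ p = v := by rw [hp, Matrix.mulVec_mulVec, Matrix.mul_nonsing_inv A hA, Matrix.one_mulVec]
  have hAq : A *ᵥ q = ones n := by rw [hq, Matrix.mulVec_mulVec, Matrix.mul_nonsing_inv A hA, Matrix.one_mulVec]
  have hSw : S *ᵥ w = v := by
    rw [hdec, Matrix.add_mulVec, onesVm, smul_mulVec]
    have hw1 : ones n ⬝ᵥ w = t⁻¹ * (s - c * a) := by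
      rw [hw]
      simp [dotProduct_smul, dotProduct_sub, smul_eq_mul, ← ha, ← hs]
    have hw2 : A *ᵥ w = t⁻¹ • (v - c • ones n) := by
      rw [hw]
      rw [Matrix.mulVec_smul, Matrix.mulVec_sub, Matrix.mulVec_smul, hAp, hAq]
    rw [hw1, hw2]
    ext i
    simp only [Pi.add_apply, Pi.smul_apply, Pi.sub_apply, smul_eq_mul, ones]
    field_simp [hc]
    have hct : c * (t + a) = s := by rw [hc, inv_mul_eq_div, div_mul_cancel₀ _ hta]
    rw [← hct]
    ring
  have hinv : S⁻¹ *ᵥ v = w := by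
    rw [← hSw, Matrix.mulVec_mulVec, Matrix.nonsing_inv_mul S hS, Matrix.one_mulVec]
  rw [hinv, hw]
  simp only [dotProduct_smul, dotProduct_sub, smul_eq_mul, ← hp, ← hq]

/-- Continuity of the quadratic form of the inverse at an invertible point. -/
lemma tendsto_inv_quad {n : ℕ} (D : Matrix (Fin n) (Fin n) ℝ) (hDdet : IsUnit D.det)
    (A : ℝ → Matrix (Fin n) (Fin n) ℝ) (l : Filter ℝ)
    (hA : Tendsto A l (𝓝 D)) (u v : Fin n → ℝ) :
    Tendsto (fun ξ => u ⬝ᵥ (A ξ)⁻¹.mulVec v) l (𝓝 (u ⬝ᵥ D⁻¹.mulVec v)) := by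
  have key : ∀ M : Matrix (Fin n) (Fin n) ℝ,
      u ⬝ᵥ M⁻¹.mulVec v = (M.det)⁻¹ * (u ⬝ᵥ M.adjugate.mulVec v) := by
    intro M
    rw [Matrix.inv_def, Ring.inverse_eq_inv', smul_mulVec, dotProduct_smul, smul_eq_mul]
  simp only [key]
  have hcadj : Continuous (fun M : Matrix (Fin n) (Fin n) ℝ => u ⬝ᵥ M.adjugate.mulVec v) :=
    Continuous.dotProduct continuous_const
      ((continuous_id.matrix_adjugate).matrix_mulVec continuous_const)
  have hdet : Tendsto (fun ξ => (A ξ).det) l (𝓝 D.det) :=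
    ((continuous_id.matrix_det).tendsto D).comp hA
  exact (hdet.inv₀ hDdet.ne_zero).mul ((hcadj.tendsto D).comp hA)

lemma aux1 (a t : ℝ) (ht : t ≠ 0) (hta : t + a ≠ 0) :
    a / (t + a) = t⁻¹ * (a - (t + a)⁻¹ * a * a) := by
  field_simp
  ring

lemma aux2 (x t : ℝ) (ht : t ≠ 0) : x = t * (t⁻¹ * x) := by
  field_simp

/-- as ξ → 0⁺, (i) 1'Σ(ξ)⁻¹1 → 1; (ii) for X with X'GX ≠ 0,
ν(ξ)·X'Σ(ξ)⁻¹X → X'D⁻¹X − (1'D⁻¹X)²/(1'D⁻¹1) = X'GX. -/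
theorem quadratic_form_asymptotics
    (n : ℕ) (hn : 2 ≤ n)
    (D : Matrix (Fin n) (Fin n) ℝ) (hDsymm : D.IsSymm) (hDdet : IsUnit D.det)
    (hD1 : ones n ⬝ᵥ D⁻¹.mulVec (ones n) ≠ 0)
    (ν : ℝ → ℝ) (hνpos : ∀ ξ > 0, 0 < ν ξ)
    (hν0 : Tendsto ν (𝓝[>] 0) (𝓝 0))
    (Sg : ℝ → Matrix (Fin n) (Fin n) ℝ) (hpd : ∀ ξ > 0, (Sg ξ).PosDef)
    (E : ℝ → Matrix (Fin n) (Fin n) ℝ)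
    (hE : ∀ i j, Tendsto (fun ξ => E ξ i j) (𝓝[>] 0) (𝓝 0))
    (hdecomp : ∀ ξ > 0, Sg ξ = vecMulVec (ones n) (ones n) + ν ξ • (D + E ξ)) :
    Tendsto (fun ξ => ones n ⬝ᵥ (Sg ξ)⁻¹.mulVec (ones n)) (𝓝[>] 0) (𝓝 1) ∧
    ∀ X : Fin n → ℝ, X ⬝ᵥ (Gmat D).mulVec X ≠ 0 →
      Tendsto (fun ξ => ν ξ * (X ⬝ᵥ (Sg ξ)⁻¹.mulVec X)) (𝓝[>] 0)
        (𝓝 (X ⬝ᵥ D⁻¹.mulVec X -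
          (ones n ⬝ᵥ D⁻¹.mulVec X) ^ 2 / (ones n ⬝ᵥ D⁻¹.mulVec (ones n)))) ∧
      X ⬝ᵥ D⁻¹.mulVec X -
          (ones n ⬝ᵥ D⁻¹.mulVec X) ^ 2 / (ones n ⬝ᵥ D⁻¹.mulVec (ones n))
        = X ⬝ᵥ (Gmat D).mulVec X := by
  set l := 𝓝[>] (0:ℝ) with hl
  have hAtend : Tendsto (fun ξ => D + E ξ) l (𝓝 D) := by
    refine tendsto_pi_nhds.2 ?_
    intro i
    rw [tendsto_pi_nhds]
    intro j
    simpa [Matrix.add_apply] using (tendsto_const_nhds (x := D i j)).add (hE i j)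
  -- scalar limits
  have ha : Tendsto (fun ξ => ones n ⬝ᵥ (D + E ξ)⁻¹.mulVec (ones n)) l
      (𝓝 (ones n ⬝ᵥ D⁻¹.mulVec (ones n))) :=
    tendsto_inv_quad D hDdet _ l hAtend _ _
  have hξpos : ∀ᶠ ξ in l, 0 < ξ := eventually_mem_nhdsWithin
  have hdetev : ∀ᶠ ξ in l, IsUnit (D + E ξ).det := by
    have hdet : Tendsto (fun ξ => (D + E ξ).det) l (𝓝 D.det) :=
      ((continuous_id.matrix_det).tendsto D).comp hAtend
    filter_upwards [hdet.eventually_ne hDdet.ne_zero] with ξ h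
    exact isUnit_iff_ne_zero.2 h
  have hνatend : Tendsto (fun ξ => ν ξ + ones n ⬝ᵥ (D + E ξ)⁻¹.mulVec (ones n)) l
      (𝓝 (ones n ⬝ᵥ D⁻¹.mulVec (ones n))) := by
    have := hν0.add ha
    rwa [zero_add] at this
  have hνaev : ∀ᶠ ξ in l, ν ξ + ones n ⬝ᵥ (D + E ξ)⁻¹.mulVec (ones n) ≠ 0 :=
    hνatend.eventually_ne hD1
  have hsm : ∀ (u v : Fin n → ℝ), ∀ᶠ ξ in l,
      u ⬝ᵥ (Sg ξ)⁻¹.mulVec v = (ν ξ)⁻¹ * ((u ⬝ᵥ (D + E ξ)⁻¹.mulVec v) -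
        (ν ξ + ones n ⬝ᵥ (D + E ξ)⁻¹.mulVec (ones n))⁻¹ *
          (ones n ⬝ᵥ (D + E ξ)⁻¹.mulVec v) * (u ⬝ᵥ (D + E ξ)⁻¹.mulVec (ones n))) := by
    intro u v
    filter_upwards [hξpos, hdetev, hνaev] with ξ hξ hdet hna
    exact sm_scalar (D + E ξ) (Sg ξ) (ν ξ) (hνpos ξ hξ).ne' hdet
      ((hpd ξ hξ).det_pos.ne'.isUnit) (hdecomp ξ hξ) hna u v
  constructor
  · -- part (i)
    have heq : ∀ᶠ ξ in l,
        (fun ξ => (ones n ⬝ᵥ (D + E ξ)⁻¹.mulVec (ones n)) /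
          (ν ξ + ones n ⬝ᵥ (D + E ξ)⁻¹.mulVec (ones n))) ξ
        = ones n ⬝ᵥ (Sg ξ)⁻¹.mulVec (ones n) := by
      filter_upwards [hsm (ones n) (ones n), hξpos, hνaev] with ξ hξ hν hna
      rw [hξ]
      exact aux1 _ _ (hνpos ξ hν).ne' hna
    have hlim : Tendsto (fun ξ => (ones n ⬝ᵥ (D + E ξ)⁻¹.mulVec (ones n)) /
        (ν ξ + ones n ⬝ᵥ (D + E ξ)⁻¹.mulVec (ones n))) l (𝓝 1) := by
      have := ha.div hνatend hD1
      rwa [div_self hD1] at this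
    exact hlim.congr' heq
  · intro X _
    have hb : Tendsto (fun ξ => ones n ⬝ᵥ (D + E ξ)⁻¹.mulVec X) l
        (𝓝 (ones n ⬝ᵥ D⁻¹.mulVec X)) := tendsto_inv_quad D hDdet _ l hAtend _ _
    have hb' : Tendsto (fun ξ => X ⬝ᵥ (D + E ξ)⁻¹.mulVec (ones n)) l
        (𝓝 (X ⬝ᵥ D⁻¹.mulVec (ones n))) := tendsto_inv_quad D hDdet _ l hAtend _ _
    have hcX : Tendsto (fun ξ => X ⬝ᵥ (D + E ξ)⁻¹.mulVec X) l
        (𝓝 (X ⬝ᵥ D⁻¹.mulVec X)) := tendsto_inv_quad D hDdet _ l hAtend _ _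
    have hsym : X ⬝ᵥ D⁻¹.mulVec (ones n) = ones n ⬝ᵥ D⁻¹.mulVec X := by
      rw [Matrix.dotProduct_mulVec, ← Matrix.mulVec_transpose, Matrix.transpose_nonsing_inv,
        hDsymm.eq, dotProduct_comm]
    constructor
    · have hlim : Tendsto (fun ξ => (X ⬝ᵥ (D + E ξ)⁻¹.mulVec X) -
          (ν ξ + ones n ⬝ᵥ (D + E ξ)⁻¹.mulVec (ones n))⁻¹ *
            (ones n ⬝ᵥ (D + E ξ)⁻¹.mulVec X) * (X ⬝ᵥ (D + E ξ)⁻¹.mulVec (ones n))) l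
          (𝓝 (X ⬝ᵥ D⁻¹.mulVec X - (ones n ⬝ᵥ D⁻¹.mulVec X) ^ 2 /
            (ones n ⬝ᵥ D⁻¹.mulVec (ones n)))) := by
        have h := hcX.sub (((hνatend.inv₀ hD1).mul hb).mul hb')
        have hval : X ⬝ᵥ D⁻¹.mulVec X - (ones n ⬝ᵥ D⁻¹.mulVec (ones n))⁻¹ *
            (ones n ⬝ᵥ D⁻¹.mulVec X) * (X ⬝ᵥ D⁻¹.mulVec (ones n))
            = X ⬝ᵥ D⁻¹.mulVec X - (ones n ⬝ᵥ D⁻¹.mulVec X) ^ 2 /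
              (ones n ⬝ᵥ D⁻¹.mulVec (ones n)) := by
          rw [hsym]; ring
        rwa [hval] at h
      refine hlim.congr' ?_
      filter_upwards [hsm X X, hξpos] with ξ hξ hν
      rw [hξ]
      exact aux2 _ _ (hνpos ξ hν).ne'
    · -- algebraic identity
      rw [Gmat, Matrix.sub_mulVec, dotProduct_sub, smul_mulVec, dotProduct_smul,
        smul_eq_mul, ← Matrix.mulVec_mulVec, ← Matrix.mulVec_mulVec, onesVm,
        Matrix.mulVec_smul, dotProduct_smul, smul_eq_mul, hsym]
      ring
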